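/- Every matrix A ∈ GL₂⁺(ℚ) is equivalent to an upper triangular matrix of the form [[a, b], [0, 1]] with a > 0, where a = gcd(A₁₁, A₂₁)²/det(A). Moreover, [[a, b], [0, 1]] is equivalent to [[a', b'], [0, 1]] if and only if a = a' and b ≡ b' (mod ℤ). -/

import Mathlib

/-- The gcd of two rationals: the non-negative rational `δ` with `aℤ + bℤ = δℤ`. -/
def ratGcd (a b : ℚ) : ℚ :=
  (Int.gcd (a.num * (b.den : ℤ)) (b.num * (a.den : ℤ)) : ℚ) / ((a.den : ℚ) * (b.den : ℚ))

/-- Two rational matrices are equivalent if `A' = λ B A` for some `B ∈ SL₂(ℤ)`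
and non-zero rational `λ`. -/
def MatEquiv (A A' : Matrix (Fin 2) (Fin 2) ℚ) : Prop :=
  ∃ (B : Matrix (Fin 2) (Fin 2) ℤ) (l : ℚ), B.det = 1 ∧ l ≠ 0 ∧
    A' = l • ((B.map (Int.cast : ℤ → ℚ)) * A)

/-- The normalized left content of a matrix `A = [[a,b],[c,d]]`, namely `gcd(a,c)² / det A`. -/
noncomputable def nlc (A : Matrix (Fin 2) (Fin 2) ℚ) : ℚ :=
  (ratGcd (A 0 0) (A 1 0)) ^ 2 / A.det

lemma ratGcd_decomp (p r : ℚ) (h : p ≠ 0 ∨ r ≠ 0) :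
    ∃ u v x y : ℤ, 0 < ratGcd p r ∧ p = ratGcd p r * u ∧ r = ratGcd p r * v ∧
      x * u + y * v = 1 := by
  set N1 : ℤ := p.num * (r.den : ℤ) with hN1
  set N2 : ℤ := r.num * (p.den : ℤ) with hN2
  have hg0 : Int.gcd N1 N2 ≠ 0 := by
    intro h0
    rw [Int.gcd_eq_zero_iff] at h0
    rcases h0 with ⟨h1, h2⟩
    have hp : p.num = 0 := by
      have := mul_eq_zero.mp h1
      simpa [Rat.den_ne_zero] using this
    have hr : r.num = 0 := by
      have := mul_eq_zero.mp h2
      simpa [Rat.den_ne_zero] using this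
    rcases h with h | h
    · exact h (Rat.num_eq_zero.mp hp)
    · exact h (Rat.num_eq_zero.mp hr)
  set g : ℤ := (Int.gcd N1 N2 : ℤ) with hgdef
  have hgz : g ≠ 0 := by rw [hgdef]; exact_mod_cast hg0
  have hgpos : 0 < g := lt_of_le_of_ne (by positivity) (Ne.symm hgz)
  have hdvd1 : g ∣ N1 := Int.gcd_dvd_left N1 N2
  have hdvd2 : g ∣ N2 := Int.gcd_dvd_right N1 N2
  have hcast : ((Int.gcd N1 N2 : ℕ) : ℚ) = ((g : ℤ) : ℚ) := by rw [hgdef]; push_cast; ring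
  have hdp : ((p.den:ℚ)) ≠ 0 := by exact_mod_cast p.den_ne_zero
  have hdr : ((r.den:ℚ)) ≠ 0 := by exact_mod_cast r.den_ne_zero
  refine ⟨N1 / g, N2 / g, Int.gcdA (N1/g) (N2/g), Int.gcdB (N1/g) (N2/g), ?_, ?_, ?_, ?_⟩
  · unfold ratGcd
    rw [← hN1, ← hN2, hcast]
    have hgq : (0:ℚ) < (g:ℚ) := by exact_mod_cast hgpos
    have hdp' : (0:ℚ) < p.den := by exact_mod_cast p.pos
    have hdr' : (0:ℚ) < r.den := by exact_mod_cast r.pos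
    positivity
  · have hu : g * (N1 / g) = N1 := Int.mul_ediv_cancel' hdvd1
    have huQ : (g:ℚ) * ((N1/g : ℤ):ℚ) = (N1 : ℚ) := by exact_mod_cast congrArg (Int.cast : ℤ → ℚ) hu
    unfold ratGcd
    rw [← hN1, ← hN2, hcast]
    rw [div_mul_eq_mul_div, huQ, hN1]
    push_cast
    conv_lhs => rw [← Rat.num_div_den p]
    field_simp
  · have hu : g * (N2 / g) = N2 := Int.mul_ediv_cancel' hdvd2
    have huQ : (g:ℚ) * ((N2/g : ℤ):ℚ) = (N2 : ℚ) := by exact_mod_cast congrArg (Int.cast : ℤ → ℚ) hu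
    unfold ratGcd
    rw [← hN1, ← hN2, hcast]
    rw [div_mul_eq_mul_div, huQ, hN2]
    push_cast
    conv_lhs => rw [← Rat.num_div_den r]
    field_simp
  · have hcop : Int.gcd (N1 / g) (N2 / g) = 1 := by
      have := Int.gcd_div_gcd_div_gcd (i := N1) (j := N2) (by omega)
      simpa [← hgdef] using this
    have hbez := Int.gcd_eq_gcd_ab (N1/g) (N2/g)
    rw [hcop] at hbez
    push_cast at hbez
    linarith [hbez]

lemma int_mul_eq_one {m n : ℤ} (h : m * n = 1) : (m = 1 ∧ n = 1) ∨ (m = -1 ∧ n = -1) := by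
  have hm : IsUnit m := IsUnit.of_mul_eq_one n h
  rcases Int.isUnit_iff.mp hm with h1 | h1 <;> subst h1 <;> [left; right] <;>
    constructor <;> omega

/-- Every matrix in `GL₂⁺(ℚ)` is equivalent to an upper triangular matrix `[[a,b],[0,1]]` with
`a = nlc A > 0`; and `[[a,b],[0,1]] ∼ [[a',b'],[0,1]]` iff `a = a'` and `b ≡ b' (mod ℤ)`. -/
theorem triangular_normal_form :
    (∀ A : Matrix (Fin 2) (Fin 2) ℚ, 0 < A.det →
      ∃ a b : ℚ, 0 < a ∧ a = nlc A ∧ MatEquiv A !![a, b; 0, 1]) ∧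
    (∀ a a' b b' : ℚ, 0 < a → 0 < a' →
      (MatEquiv !![a, b; 0, 1] !![a', b'; 0, 1] ↔ a = a' ∧ ∃ m : ℤ, b - b' = (m : ℚ))) := by
  constructor
  · intro A hdet
    have hdet0 : A.det ≠ 0 := ne_of_gt hdet
    set p := A 0 0 with hp
    set q := A 0 1 with hq
    set r := A 1 0 with hr
    set s := A 1 1 with hs
    have hdet2 : A.det = p * s - q * r := by rw [Matrix.det_fin_two]
    have hpr : p ≠ 0 ∨ r ≠ 0 := by
      by_contra hc
      push_neg at hc
      rw [hdet2, hc.1, hc.2] at hdet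
      simp at hdet
    obtain ⟨u, v, x, y, hδ, hpu, hrv, hxy⟩ := ratGcd_decomp p r hpr
    set δ := ratGcd p r with hδdef
    have hδ0 : δ ≠ 0 := ne_of_gt hδ
    set l : ℚ := δ / A.det with hl
    have hl0 : l ≠ 0 := div_ne_zero hδ0 hdet0
    refine ⟨δ ^ 2 / A.det, l * (x * q + y * s), by positivity, rfl, !![x, y; -v, u], l, ?_, hl0, ?_⟩
    · rw [Matrix.det_fin_two]
      simp
      linarith [hxy]
    · have hxyQ : (x:ℚ) * u + (y:ℚ) * v = 1 := by exact_mod_cast congrArg (Int.cast : ℤ → ℚ) hxy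
      have hdetδ : δ * ((-(v:ℚ)) * q + (u:ℚ) * s) = A.det := by
        linear_combination (-s) * hpu + q * hrv - hdet2
      ext i j
      fin_cases i <;> fin_cases j <;>
        simp [Matrix.mul_apply, Fin.sum_univ_two, Matrix.map_apply]
      · rw [← hp, ← hr, hpu, hrv, hl]
        field_simp
        linear_combination -hxyQ
      · exact Or.inl rfl
      · right
        rw [← hp, ← hr, hpu, hrv]
        ring
      · rw [← hq, ← hs, hl]
        field_simp
        linear_combination -hdetδ
  · intro a a' b b' ha ha'
    constructor
    · rintro ⟨B, l, hB, hl, heq⟩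
      have h10 := congrFun (congrFun heq 1) 0
      have h11 := congrFun (congrFun heq 1) 1
      have h00 := congrFun (congrFun heq 0) 0
      have h01 := congrFun (congrFun heq 0) 1
      simp [Matrix.mul_apply, Fin.sum_univ_two, Matrix.map_apply] at h10 h11 h00 h01
      have hB10 : B 1 0 = 0 := by
        rcases h10 with h | h | h
        · exact absurd h hl
        · exact h
        · exact absurd h (ne_of_gt ha)
      rw [Matrix.det_fin_two, hB10] at hB
      simp only [mul_zero, sub_zero] at hB
      rw [hB10] at h11
      simp only [Int.cast_zero, zero_mul, zero_add] at h11
      rcases int_mul_eq_one hB with ⟨h1, h2⟩ | ⟨h1, h2⟩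
      · rw [h2] at h11
        rw [h1] at h00 h01
        simp only [Int.cast_one, mul_one, one_mul] at h11 h00 h01
        refine ⟨by rw [h00, ← h11, one_mul], -(B 0 1), ?_⟩
        rw [h01, ← h11]
        push_cast
        ring
      · rw [h2] at h11
        rw [h1] at h00 h01
        simp only [Int.cast_neg, Int.cast_one, mul_neg, mul_one, neg_mul, one_mul] at h11 h00 h01
        have hlm : l = -1 := by linarith
        rw [hlm] at h00 h01
        refine ⟨by rw [h00]; ring, B 0 1, ?_⟩
        rw [h01]
        push_cast
        ring
    · rintro ⟨haa, m, hm⟩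
      refine ⟨!![1, -m; 0, 1], 1, ?_, one_ne_zero, ?_⟩
      · rw [Matrix.det_fin_two]; simp
      · ext i j
        fin_cases i <;> fin_cases j <;>
          simp [Matrix.mul_apply, Fin.sum_univ_two, Matrix.map_apply]
        · exact haa.symm
        · linarith [hm]
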